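/- The number of words of length n (n ≥ 1) over {A,B,C,D} that start with A, contain exactly one letter B, no other letter A, and whose letters in positions other than the initial A and the single B lie in {C,D} with the constraint that the letter immediately before B is not C, equals the coefficient of x^n in x·(x/(1-2x)+1)·x·(1/(1-2x)). -/

import Mathlib

/-- `oneBSegCount n` counts words of length `n` over `{A,B,C,D}` starting with `A`,
containing exactly one `B`, no other `A`, all other letters in `{C, D}`, and in which
the letter immediately preceding the `B` is not a `C`. -/
noncomputable def oneBSegCount (n : ℕ) : ℕ :=
  Nat.card {w : List (Fin 4) // w.length = n ∧
    (∃ t : List (Fin 4), w = (0 : Fin 4) :: t ∧ (0 : Fin 4) ∉ t ∧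
      t.count (1 : Fin 4) = 1) ∧
    ∀ i : ℕ, w[i + 1]? = some (1 : Fin 4) → w[i]? ≠ some (2 : Fin 4)}

namespace OneBSeg

/-- encode `false ↦ C`, `true ↦ D` -/
def cd : Bool → Fin 4 := fun b => if b then 3 else 2

lemma cd_ne_zero (b : Bool) : cd b ≠ 0 := by cases b <;> decide
lemma cd_ne_one (b : Bool) : cd b ≠ 1 := by cases b <;> decide
lemma cd_injective : Function.Injective cd := by
  intro a b h; cases a <;> cases b <;> simp_all [cd]

lemma one_not_mem_map (l : List Bool) : (1 : Fin 4) ∉ l.map cd := by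
  simp only [List.mem_map]
  rintro ⟨b, -, hb⟩
  exact cd_ne_one b hb

lemma exists_map_cd {l : List (Fin 4)} (h : ∀ x ∈ l, x ≠ 0 ∧ x ≠ 1) :
    ∃ b : List Bool, l = b.map cd := by
  induction l with
  | nil => exact ⟨[], rfl⟩
  | cons x l ih =>
    obtain ⟨b, hb⟩ := ih fun y hy => h y (List.mem_cons_of_mem _ hy)
    obtain ⟨hx0, hx1⟩ := h x (List.mem_cons_self)
    have : x = 2 ∨ x = 3 := by omega
    rcases this with rfl | rfl
    · exact ⟨false :: b, by simp [hb, cd]⟩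
    · exact ⟨true :: b, by simp [hb, cd]⟩

lemma split_of_count_one {l : List (Fin 4)} (h : l.count (1 : Fin 4) = 1) :
    ∃ s t, l = s ++ (1 : Fin 4) :: t ∧ (1 : Fin 4) ∉ s ∧ (1 : Fin 4) ∉ t := by
  induction l with
  | nil => simp at h
  | cons x l ih =>
    by_cases hx : x = 1
    · subst hx
      rw [List.count_cons_self] at h
      have h1 : (1 : Fin 4) ∉ l := by
        rw [← List.count_eq_zero]; omega
      exact ⟨[], l, by simp, by simp, h1⟩
    · rw [List.count_cons_of_ne hx] at h
      obtain ⟨s, t, rfl, hs, ht⟩ := ih h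
      refine ⟨x :: s, t, by simp, ?_, ht⟩
      intro hmem
      rcases List.mem_cons.1 hmem with h1 | h1
      · exact hx h1.symm
      · exact hs h1

lemma split_unique {s s' t t' : List (Fin 4)} (hs : (1 : Fin 4) ∉ s)
    (hs' : (1 : Fin 4) ∉ s') (h : s ++ (1 : Fin 4) :: t = s' ++ (1 : Fin 4) :: t') :
    s = s' ∧ t = t' := by
  induction s generalizing s' with
  | nil =>
    cases s' with
    | nil => simpa using h
    | cons y s' =>
      simp only [List.nil_append, List.cons_append, List.cons.injEq] at h
      have hmem : (1 : Fin 4) ∈ y :: s' := by rw [← h.1]; exact List.mem_cons_self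
      exact absurd hmem hs'
  | cons x s ih =>
    cases s' with
    | nil =>
      simp only [List.cons_append, List.nil_append, List.cons.injEq] at h
      have hmem : (1 : Fin 4) ∈ x :: s := by rw [h.1]; exact List.mem_cons_self
      exact absurd hmem hs
    | cons y s' =>
      simp only [List.cons_append, List.cons.injEq] at h
      obtain ⟨rfl, h2⟩ := h
      have := ih (fun hm => hs (List.mem_cons_of_mem _ hm))
        (fun hm => hs' (List.mem_cons_of_mem _ hm)) h2
      exact ⟨by rw [this.1], this.2⟩

lemma index_of_one {l v : List (Fin 4)} (hl : (1 : Fin 4) ∉ l) (hv : (1 : Fin 4) ∉ v)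
    {i : ℕ} (h : (l ++ (1 : Fin 4) :: v)[i]? = some 1) : i = l.length := by
  rcases lt_trichotomy i l.length with h' | h' | h'
  · rw [List.getElem?_append_left h'] at h
    have hli : l[i] = 1 := by
      rw [List.getElem?_eq_getElem h'] at h
      exact Option.some_injective _ h
    exact absurd (hli ▸ l.getElem_mem h') hl
  · exact h'
  · exfalso
    rw [List.getElem?_append_right h'.le] at h
    obtain ⟨j, hj⟩ : ∃ j, i - l.length = j + 1 := ⟨i - l.length - 1, by omega⟩
    rw [hj] at h
    simp only [List.getElem?_cons_succ] at h
    rcases lt_or_ge j v.length with hjv | hjv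
    · have hvj : v[j] = 1 := by
        rw [List.getElem?_eq_getElem hjv] at h
        exact Option.some_injective _ h
      exact absurd (hvj ▸ v.getElem_mem hjv) hv
    · rw [List.getElem?_eq_none hjv] at h; simp at h

lemma get_one (l v : List (Fin 4)) :
    ((0 : Fin 4) :: (l ++ (1 : Fin 4) :: v))[l.length + 1]? = some 1 := by
  simp only [List.getElem?_cons_succ]
  rw [List.getElem?_append_right (le_refl _)]
  simp

lemma get_concat (l v : List (Fin 4)) (a : Fin 4) :
    ((0 : Fin 4) :: ((l ++ [a]) ++ (1 : Fin 4) :: v))[(l ++ [a]).length]? = some a := by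
  have hlen : (l ++ [a]).length = l.length + 1 := by simp
  rw [hlen]
  simp only [List.getElem?_cons_succ]
  rw [List.getElem?_append_left (by simp), List.getElem?_concat_length]

/-- The property from the definition. -/
def P (w : List (Fin 4)) : Prop :=
  (∃ t : List (Fin 4), w = (0 : Fin 4) :: t ∧ (0 : Fin 4) ∉ t ∧
      t.count (1 : Fin 4) = 1) ∧
    ∀ i : ℕ, w[i + 1]? = some (1 : Fin 4) → w[i]? ≠ some (2 : Fin 4)

lemma P_iff (w : List (Fin 4)) :
    P w ↔ ∃ u v : List Bool,
      w = (0 : Fin 4) :: (u.map cd ++ (1 : Fin 4) :: v.map cd) ∧ u.getLast? ≠ some false := by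
  constructor
  · rintro ⟨⟨t, rfl, h0, hc⟩, hget⟩
    obtain ⟨s, r, rfl, hs, hr⟩ := split_of_count_one hc
    have hmem : ∀ x ∈ s, x ≠ 0 ∧ x ≠ 1 := fun x hx =>
      ⟨fun h => h0 (h ▸ List.mem_append_left _ hx), fun h => hs (h ▸ hx)⟩
    have hmemr : ∀ x ∈ r, x ≠ 0 ∧ x ≠ 1 := fun x hx =>
      ⟨fun h => h0 (h ▸ List.mem_append_right _ (List.mem_cons_of_mem _ hx)),
       fun h => hr (h ▸ hx)⟩
    obtain ⟨u, rfl⟩ := exists_map_cd hmem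
    obtain ⟨v, rfl⟩ := exists_map_cd hmemr
    refine ⟨u, v, rfl, ?_⟩
    rcases u.eq_nil_or_concat' with rfl | ⟨u', b, rfl⟩
    · simp
    · rw [List.getLast?_concat]
      rintro hb
      have hb' : b = false := by simpa using hb
      subst hb'
      have h1 := get_one (List.map cd (u' ++ [false])) (List.map cd v)
      have h2 := hget _ h1
      apply h2
      have h3 := get_concat (List.map cd u') (List.map cd v) (cd false)
      simp only [List.map_append, List.map_cons, List.map_nil] at *
      simpa [cd] using h3
  · rintro ⟨u, v, rfl, hu⟩
    constructor
    · refine ⟨u.map cd ++ (1 : Fin 4) :: v.map cd, rfl, ?_, ?_⟩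
      · simp only [List.mem_append, List.mem_cons, List.mem_map]
        rintro (⟨b, -, hb⟩ | h | ⟨b, -, hb⟩)
        · exact cd_ne_zero b hb
        · exact absurd h.symm (by decide)
        · exact cd_ne_zero b hb
      · rw [List.count_append, List.count_cons_self,
          List.count_eq_zero.2 (one_not_mem_map u), List.count_eq_zero.2 (one_not_mem_map v)]
    · intro i hi hne
      simp only [List.getElem?_cons_succ] at hi
      have hi' : i = (u.map cd).length :=
        index_of_one (one_not_mem_map u) (one_not_mem_map v) hi
      subst hi'
      rcases u.eq_nil_or_concat' with rfl | ⟨u', b, rfl⟩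
      · simp only [List.map_nil, List.nil_append, List.length_nil] at hne
        have h0 : ((0 : Fin 4) :: ((1 : Fin 4) :: List.map cd v))[0]? = some 0 := rfl
        rw [h0] at hne
        exact absurd (Option.some_injective _ hne) (by decide)
      · have hb : b = true := by
          rw [List.getLast?_concat] at hu
          cases b
          · simp at hu
          · rfl
        subst hb
        have h3 := get_concat (List.map cd u') (List.map cd v) (cd true)
        simp only [List.map_append, List.map_cons, List.map_nil] at hne h3
        rw [h3] at hne
        exact absurd (Option.some_injective _ hne) (by decide)

/-- words ending in `true` (or empty) of length `k` -/
def U (k : ℕ) : Type := {u : List.Vector Bool k // u.1.getLast? ≠ some false}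

instance (k : ℕ) : Fintype (U k) := by unfold U; infer_instance

/-- the parameter type -/
def Dom (n : ℕ) : Type := Σ k : Fin (n + 1), U k × List.Vector Bool (n - k)

instance (n : ℕ) : Fintype (Dom n) := by unfold Dom; infer_instance

def eU0 : U 0 ≃ Unit where
  toFun _ := ()
  invFun _ := ⟨⟨[], rfl⟩, by simp⟩
  left_inv := by
    rintro ⟨⟨l, hl⟩, h⟩
    have : l = [] := List.eq_nil_of_length_eq_zero hl
    subst this
    rfl
  right_inv _ := rfl

def eUsucc (k : ℕ) : List.Vector Bool k ≃ U (k + 1) where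
  toFun b := ⟨⟨b.1 ++ [true], by simp [b.2]⟩, by simp [List.getLast?_concat]⟩
  invFun u := ⟨u.1.1.dropLast, by simp [u.1.2]⟩
  left_inv b := Subtype.ext (by simp)
  right_inv := by
    rintro ⟨⟨l, hl⟩, h⟩
    apply Subtype.ext
    apply Subtype.ext
    have hne : l ≠ [] := by intro e; subst e; simp at hl
    have hsome := List.getLast?_eq_getLast hne
    have hlast : l.getLast hne = true := by
      cases hb : l.getLast hne
      · exact absurd (by rw [hsome, hb]) h
      · rfl
    show List.dropLast l ++ [true] = l
    rw [← hlast]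
    exact List.dropLast_append_getLast hne

lemma card_U : ∀ k : ℕ, Fintype.card (U k) = if k = 0 then 1 else 2 ^ (k - 1)
  | 0 => by rw [Fintype.card_congr eU0]; simp
  | k + 1 => by
    rw [← Fintype.card_congr (eUsucc k), card_vector]
    simp

lemma card_Dom (n : ℕ) : Nat.card (Dom n) = 2 ^ n + n * 2 ^ (n - 1) := by
  rw [Nat.card_eq_fintype_card]
  rw [show Fintype.card (Dom n) = ∑ k : Fin (n+1), Fintype.card (U k × List.Vector Bool (n - k))
    from Fintype.card_sigma]
  have hterm : ∀ k : Fin (n+1), Fintype.card (U k × List.Vector Bool (n - k))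
      = (if (k : ℕ) = 0 then 1 else 2 ^ ((k : ℕ) - 1)) * 2 ^ (n - (k : ℕ)) := by
    intro k
    rw [Fintype.card_prod, card_U, card_vector]
    simp
  rw [Finset.sum_congr rfl fun k _ => hterm k]
  rw [Fin.sum_univ_eq_sum_range (fun k => (if k = 0 then 1 else 2 ^ (k - 1)) * 2 ^ (n - k))]
  rw [Finset.sum_range_succ']
  simp only [if_pos rfl, one_mul, Nat.sub_zero, Nat.add_eq_zero, Nat.succ_ne_zero,
    and_false, if_false, Nat.add_sub_cancel]
  have : ∀ k ∈ Finset.range n, 2 ^ k * 2 ^ (n - (k + 1)) = 2 ^ (n - 1) := by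
    intro k hk
    rw [Finset.mem_range] at hk
    rw [← pow_add]
    congr 1
    omega
  rw [Finset.sum_congr rfl this, Finset.sum_const, Finset.card_range, smul_eq_mul]
  simp [Nat.add_comm]

/-- the bijection -/
def F (n : ℕ) (p : Dom n) :
    {w : List (Fin 4) // w.length = n + 2 ∧ P w} :=
  ⟨(0 : Fin 4) :: (p.2.1.1.1.map cd ++ (1 : Fin 4) :: p.2.2.1.map cd),
    by
      obtain ⟨k, u, v⟩ := p
      have h1 := u.1.2
      have h2 := v.2
      have h3 := k.isLt
      constructor
      · simp only [List.length_append, List.length_cons, List.length_map, h1, h2]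
        omega
      · exact (P_iff _).2 ⟨u.1.1, v.1, rfl, u.2⟩⟩

lemma F_bijective (n : ℕ) : Function.Bijective (F n) := by
  constructor
  · rintro ⟨k, u, v⟩ ⟨k', u', v'⟩ h
    have h' : (0 : Fin 4) :: (u.1.1.map cd ++ (1 : Fin 4) :: v.1.map cd)
        = (0 : Fin 4) :: (u'.1.1.map cd ++ (1 : Fin 4) :: v'.1.map cd) := congrArg Subtype.val h
    simp only [List.cons.injEq, true_and] at h'
    obtain ⟨hu, hv⟩ := split_unique (one_not_mem_map _) (one_not_mem_map _) h'
    have hu' : u.1.1 = u'.1.1 := List.map_injective_iff.2 cd_injective hu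
    have hv' : v.1 = v'.1 := List.map_injective_iff.2 cd_injective hv
    have hk : k = k' := by
      apply Fin.ext
      rw [← u.1.2, ← u'.1.2, hu']
    subst hk
    have : u = u' := Subtype.ext (Subtype.ext hu')
    have : v = v' := Subtype.ext hv'
    subst_vars; rfl
  · rintro ⟨w, hlen, hP⟩
    obtain ⟨u, v, rfl, hu⟩ := (P_iff w).1 hP
    have hlen' : u.length + v.length = n := by
      simp only [List.length_append, List.length_cons, List.length_map] at hlen
      omega
    have hk : u.length < n + 1 := by omega
    refine ⟨⟨⟨u.length, hk⟩, ⟨⟨u, rfl⟩, hu⟩, ⟨v, by simp; omega⟩⟩, ?_⟩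
    apply Subtype.ext
    rfl

lemma count_eq (n : ℕ) : oneBSegCount (n + 2) = 2 ^ n + n * 2 ^ (n - 1) := by
  rw [← card_Dom n]
  exact (Nat.card_eq_of_bijective (F n) (F_bijective n)).symm

lemma count_one : oneBSegCount 1 = 0 := by
  rw [oneBSegCount, Nat.card_eq_zero]
  left
  constructor
  rintro ⟨w, hlen, ⟨t, rfl, -, hc⟩, -⟩
  simp only [List.length_cons] at hlen
  have : t = [] := by
    apply List.eq_nil_of_length_eq_zero; omega
  subst this
  simp at hc

end OneBSeg

open PowerSeries in
theorem oneBSegCount_formula :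
    ∀ n : ℕ, 1 ≤ n →
      (oneBSegCount n : ℚ) =
        PowerSeries.coeff (R := ℚ) n
          (X * (X * (1 - 2 * X)⁻¹ + 1) * X * (1 - 2 * X)⁻¹) := by
  have hc : constantCoeff (R := ℚ) (1 - 2 * X) ≠ 0 := by simp
  set G : ℚ⟦X⟧ := PowerSeries.mk fun k => (2 : ℚ) ^ k with hG
  have h2C : (2 : ℚ⟦X⟧) = C (R := ℚ) 2 := (map_ofNat (C (R := ℚ)) 2).symm
  have hmul : G * (1 - 2 * X) = 1 := by
    have hexp : G * (1 - 2 * X) = G - (X * G) * C (R := ℚ) 2 := by rw [← h2C]; ring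
    rw [hexp]
    ext k
    rw [map_sub, coeff_mul_C]
    cases k with
    | zero => simp [hG, coeff_mk]
    | succ k =>
      rw [coeff_succ_X_mul]
      simp [hG, coeff_mk, pow_succ]
  have hinv : (1 - 2 * X : ℚ⟦X⟧)⁻¹ = G := (PowerSeries.inv_eq_iff_mul_eq_one hc).2 hmul
  have hG2 : G * G = PowerSeries.mk fun k => ((k : ℚ) + 1) * 2 ^ k := by
    ext k
    rw [PowerSeries.coeff_mul]
    simp only [hG, coeff_mk]
    calc ∑ p ∈ Finset.HasAntidiagonal.antidiagonal k, (2 : ℚ) ^ p.1 * 2 ^ p.2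
        = ∑ _p ∈ Finset.HasAntidiagonal.antidiagonal k, (2 : ℚ) ^ k := by
          refine Finset.sum_congr rfl fun p hp => ?_
          rw [← pow_add]
          congr 1
          exact Finset.HasAntidiagonal.mem_antidiagonal.1 hp
      _ = ((k : ℚ) + 1) * 2 ^ k := by
          rw [Finset.sum_const, Finset.Nat.card_antidiagonal, nsmul_eq_mul]
          push_cast
          ring
  intro n hn
  rw [hinv]
  have hexp : X * (X * G + 1) * X * G = X ^ 2 * G + X ^ 3 * (G * G) := by ring
  rw [hexp, map_add, coeff_X_pow_mul' G 2 n, coeff_X_pow_mul' (G * G) 3 n]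
  match n, hn with
  | 1, _ =>
    rw [OneBSeg.count_one]
    norm_num
  | 2, _ =>
    rw [show (2 : ℕ) = 0 + 2 from rfl, OneBSeg.count_eq]
    simp [hG, coeff_mk]
  | (m + 3), _ =>
    rw [show m + 3 = (m + 1) + 2 from rfl, OneBSeg.count_eq, hG2]
    simp only [hG, coeff_mk, if_pos (by omega : 2 ≤ m + 3), if_pos (by omega : 3 ≤ m + 3),
      show m + 3 - 2 = m + 1 from rfl, show m + 3 - 3 = m from rfl]
    push_cast
    simp only [Nat.add_sub_cancel]
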